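/- Let I ⊆ (0,∞) and J ⊆ ℝ be open intervals with 0 ∉ J, let U = I × J, let k : I → ℝ be a function with 1 + k(r)·s² > 0 for all (r,s) ∈ U, and let ψ : U → (0,∞) be a C² function satisfying, at every point (r,s) ∈ U, the two equations 2 r s k(r) ψ − s ψ_r − r ψ_s = 0 and r ψ_ss + s ψ_rs − ψ_r = 0. Then there exists a function k₂ : I → (0,∞) such that ψ(r,s) = k₂(r)·√(1 + k(r)·s²) for all (r,s) ∈ U. -/

import Mathlib

/-- Partial derivative in the first variable `r` of a function on `ℝ × ℝ`. -/
noncomputable def pdr (f : ℝ × ℝ → ℝ) (p : ℝ × ℝ) : ℝ := fderiv ℝ f p (1, 0)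

/-- Partial derivative in the second variable `s` of a function on `ℝ × ℝ`. -/
noncomputable def pds (f : ℝ × ℝ → ℝ) (p : ℝ × ℝ) : ℝ := fderiv ℝ f p (0, 1)

/-- A derivative along a vertical slice. -/
lemma slice_hasDerivAt {F : ℝ × ℝ → ℝ} {r s : ℝ} (hF : DifferentiableAt ℝ F (r, s)) :
    HasDerivAt (fun t => F (r, t)) (pds F (r, s)) s := by
  have hL : HasDerivAt (fun t : ℝ => ((r, t) : ℝ × ℝ)) ((0 : ℝ), (1 : ℝ)) s :=
    (hasDerivAt_const s r).prodMk (hasDerivAt_id s)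
  have := hF.hasFDerivAt.comp_hasDerivAt s hL
  simpa [pds, Function.comp_def] using this

/-- a positive `C²` solution `ψ` of
`2 r s k(r) ψ − s ψ_r − r ψ_s = 0` and `r ψ_ss + s ψ_rs − ψ_r = 0` on
`U = I × J` (with `I ⊆ (0,∞)`, `0 ∉ J` open intervals, and `1 + k(r) s² > 0` on `U`)
has the form `ψ(r,s) = k₂(r) √(1 + k(r) s²)` for some `k₂ : I → (0,∞)`. -/
theorem psi_eq_k2_mul_sqrt (I J : Set ℝ)
    (hIopen : IsOpen I) (hIconn : IsPreconnected I)
    (hJopen : IsOpen J) (hJconn : IsPreconnected J)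
    (hIsub : I ⊆ Set.Ioi (0 : ℝ)) (hJ0 : (0 : ℝ) ∉ J)
    (k : ℝ → ℝ) (hk : ∀ p ∈ I ×ˢ J, 0 < 1 + k p.1 * p.2 ^ 2)
    (ψ : ℝ × ℝ → ℝ) (hψ : ContDiffOn ℝ 2 ψ (I ×ˢ J))
    (hψpos : ∀ p ∈ I ×ˢ J, 0 < ψ p)
    (heq1 : ∀ p ∈ I ×ˢ J,
      2 * p.1 * p.2 * k p.1 * ψ p - p.2 * pdr ψ p - p.1 * pds ψ p = 0)
    (heq2 : ∀ p ∈ I ×ˢ J,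
      p.1 * pds (pds ψ) p + p.2 * pds (pdr ψ) p - pdr ψ p = 0) :
    ∃ k₂ : ℝ → ℝ, (∀ r ∈ I, 0 < k₂ r) ∧
      ∀ p ∈ I ×ˢ J, ψ p = k₂ p.1 * Real.sqrt (1 + k p.1 * p.2 ^ 2) := by
  have hUopen : IsOpen (I ×ˢ J) := hIopen.prod hJopen
  -- differentiability facts at points of U
  have hψdiff : ∀ p ∈ I ×ˢ J, DifferentiableAt ℝ ψ p := fun p hp =>
    ((hψ.contDiffAt (hUopen.mem_nhds hp)).differentiableAt (by norm_num))
  have hpdrdiff : ∀ p ∈ I ×ˢ J, DifferentiableAt ℝ (pdr ψ) p := by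
    intro p hp
    have h2 : ContDiffAt ℝ 2 ψ p := hψ.contDiffAt (hUopen.mem_nhds hp)
    have h1 : ContDiffAt ℝ 1 (fderiv ℝ ψ) p := h2.fderiv_right (by norm_num)
    have : ContDiffAt ℝ 1 (fun q => fderiv ℝ ψ q ((1 : ℝ), (0 : ℝ))) p :=
      h1.clm_apply contDiffAt_const
    exact this.differentiableAt one_ne_zero
  have hpdsdiff : ∀ p ∈ I ×ˢ J, DifferentiableAt ℝ (pds ψ) p := by
    intro p hp
    have h2 : ContDiffAt ℝ 2 ψ p := hψ.contDiffAt (hUopen.mem_nhds hp)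
    have h1 : ContDiffAt ℝ 1 (fderiv ℝ ψ) p := h2.fderiv_right (by norm_num)
    have : ContDiffAt ℝ 1 (fun q => fderiv ℝ ψ q ((0 : ℝ), (1 : ℝ))) p :=
      h1.clm_apply contDiffAt_const
    exact this.differentiableAt one_ne_zero
  -- key pointwise identity: ψ_s (1 + k s²) = k s ψ
  have key : ∀ p ∈ I ×ˢ J, pds ψ p * (1 + k p.1 * p.2 ^ 2) = k p.1 * p.2 * ψ p := by
    rintro ⟨r, s⟩ hp
    obtain ⟨hr, hs⟩ := hp
    have hrpos : (0 : ℝ) < r := hIsub hr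
    have hp' : ((r, s) : ℝ × ℝ) ∈ I ×ˢ J := ⟨hr, hs⟩
    set G : ℝ → ℝ := fun t =>
      2 * r * t * k r * ψ (r, t) - t * pdr ψ (r, t) - r * pds ψ (r, t) with hGdef
    have h1 : HasDerivAt (fun t => ψ (r, t)) (pds ψ (r, s)) s :=
      slice_hasDerivAt (hψdiff _ hp')
    have h2 : HasDerivAt (fun t => pdr ψ (r, t)) (pds (pdr ψ) (r, s)) s :=
      slice_hasDerivAt (hpdrdiff _ hp')
    have h3 : HasDerivAt (fun t => pds ψ (r, t)) (pds (pds ψ) (r, s)) s :=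
      slice_hasDerivAt (hpdsdiff _ hp')
    have hA : HasDerivAt (fun t => 2 * r * t * k r * ψ (r, t))
        (2 * r * k r * ψ (r, s) + 2 * r * s * k r * pds ψ (r, s)) s := by
      have hc : HasDerivAt (fun t : ℝ => 2 * r * t * k r) (2 * r * k r) s := by
        simpa using ((hasDerivAt_id s).const_mul (2 * r)).mul_const (k r)
      exact hc.mul h1
    have hB : HasDerivAt (fun t => t * pdr ψ (r, t))
        (pdr ψ (r, s) + s * pds (pdr ψ) (r, s)) s := by
      have := (hasDerivAt_id' s).mul h2; simp only [one_mul] at this; exact this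
    have hC : HasDerivAt (fun t => r * pds ψ (r, t)) (r * pds (pds ψ) (r, s)) s :=
      h3.const_mul r
    have hG : HasDerivAt G
        (2 * r * k r * ψ (r, s) + 2 * r * s * k r * pds ψ (r, s)
          - (pdr ψ (r, s) + s * pds (pdr ψ) (r, s)) - r * pds (pds ψ) (r, s)) s :=
      (hA.sub hB).sub hC
    have hGzero : G =ᶠ[nhds s] fun _ => 0 := by
      filter_upwards [hJopen.mem_nhds hs] with t ht
      have := heq1 (r, t) ⟨hr, ht⟩
      simpa [hGdef] using this
    have hD : 2 * r * k r * ψ (r, s) + 2 * r * s * k r * pds ψ (r, s)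
        - (pdr ψ (r, s) + s * pds (pdr ψ) (r, s)) - r * pds (pds ψ) (r, s) = 0 := by
      rw [← hG.deriv, hGzero.deriv_eq]
      simp
    have e1 := heq1 (r, s) hp'
    have e2 := heq2 (r, s) hp'
    simp only at e1 e2
    have hmul : r * (pds ψ (r, s) * (1 + k r * s ^ 2) - k r * s * ψ (r, s)) = 0 := by
      linear_combination (-(1 : ℝ)) * e1 + (s / 2) * hD + (s / 2) * e2
    have := mul_eq_zero.mp hmul
    rcases this with h | h
    · exact absurd h hrpos.ne'
    · linarith
  -- constancy in s of ψ / sqrt(1 + k r s²)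
  have hconst : ∀ r ∈ I, ∀ s ∈ J, ∀ t ∈ J,
      ψ (r, s) / Real.sqrt (1 + k r * s ^ 2) = ψ (r, t) / Real.sqrt (1 + k r * t ^ 2) := by
    intro r hr s hs t ht
    set h : ℝ → ℝ := fun u => ψ (r, u) / Real.sqrt (1 + k r * u ^ 2) with hhdef
    have hconv : Convex ℝ J := convex_iff_ordConnected.mpr hJconn.ordConnected
    have hder : ∀ u ∈ J, HasDerivWithinAt h ((fun _ => (0 : ℝ)) u) J u := by
      intro u hu
      have hpu : ((r, u) : ℝ × ℝ) ∈ I ×ˢ J := ⟨hr, hu⟩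
      have hupos : 0 < 1 + k r * u ^ 2 := hk _ hpu
      have hsq : Real.sqrt (1 + k r * u ^ 2) ≠ 0 := (Real.sqrt_pos.mpr hupos).ne'
      have hnum : HasDerivAt (fun v => ψ (r, v)) (pds ψ (r, u)) u :=
        slice_hasDerivAt (hψdiff _ hpu)
      have hin : HasDerivAt (fun v : ℝ => 1 + k r * v ^ 2) (2 * (k r) * u) u := by
        have := ((hasDerivAt_pow 2 u).const_mul (k r)).const_add 1
        exact this.congr_deriv (by rw [show (2:ℕ) - 1 = 1 from rfl]; push_cast; ring)
      have hden : HasDerivAt (fun v : ℝ => Real.sqrt (1 + k r * v ^ 2))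
          ((2 * k r * u) / (2 * Real.sqrt (1 + k r * u ^ 2))) u :=
        hin.sqrt hupos.ne'
      have hdiv := hnum.div hden hsq
      have hval : (pds ψ (r, u) * Real.sqrt (1 + k r * u ^ 2)
          - ψ (r, u) * ((2 * k r * u) / (2 * Real.sqrt (1 + k r * u ^ 2))))
          / Real.sqrt (1 + k r * u ^ 2) ^ 2 = 0 := by
        have hkey := key (r, u) hpu
        simp only at hkey
        have hsqsq : Real.sqrt (1 + k r * u ^ 2) ^ 2 = 1 + k r * u ^ 2 :=
          Real.sq_sqrt hupos.le
        rw [div_eq_zero_iff]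
        left
        field_simp
        linear_combination (pds ψ (r, u)) * hsqsq + hkey
      rw [hval] at hdiv
      exact hdiv.hasDerivWithinAt
    have hle := hconv.norm_image_sub_le_of_norm_hasDerivWithin_le (C := 0) hder
      (fun u _ => by simp) hs ht
    have h0 : ‖h t - h s‖ ≤ 0 := by simpa using hle
    have : h t = h s := sub_eq_zero.mp (norm_le_zero_iff.mp h0)
    exact this.symm
  -- conclude
  by_cases hJne : J.Nonempty
  · obtain ⟨s₀, hs₀⟩ := hJne
    refine ⟨fun r => ψ (r, s₀) / Real.sqrt (1 + k r * s₀ ^ 2), ?_, ?_⟩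
    · intro r hr
      have hp : ((r, s₀) : ℝ × ℝ) ∈ I ×ˢ J := ⟨hr, hs₀⟩
      exact div_pos (hψpos _ hp) (Real.sqrt_pos.mpr (hk _ hp))
    · rintro ⟨r, s⟩ ⟨hr, hs⟩
      have hc := hconst r hr s hs s₀ hs₀
      have hspos : 0 < Real.sqrt (1 + k r * s ^ 2) :=
        Real.sqrt_pos.mpr (hk (r, s) ⟨hr, hs⟩)
      simp only
      rw [← hc]
      field_simp
  · exact ⟨fun _ => 1, fun _ _ => one_pos, fun p hp => absurd hp.2 (by
      simp [Set.not_nonempty_iff_eq_empty.mp hJne])⟩
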